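/- Let G be a d-regular simple graph on a finite vertex set V, where d ≥ 1, let v ∈ V be a fixed vertex, and let t ≥ 2 be an integer. Then the number of subsets A ⊆ V with v ∈ A and |A| = t such that the subgraph of G induced on A is connected is at most 4^(t-2) · d · (d-1)^(t-2). -/

import Mathlib

set_option linter.unusedSectionVars false
section
variable {V : Type*} [Fintype V] [DecidableEq V] [LinearOrder V]
variable (G : SimpleGraph V) [DecidableRel G.Adj]

def nbrs (u : V) (D : Finset V) : List V := (G.neighborFinset u \ D).sort (· ≤ ·)

lemma mem_nbrs {u w : V} {D : Finset V} : w ∈ nbrs G u D ↔ G.Adj u w ∧ w ∉ D := by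
  simp [nbrs, Finset.mem_sort, Finset.mem_sdiff]

lemma length_nbrs (u : V) (D : Finset V) :
    (nbrs G u D).length = (G.neighborFinset u \ D).card := by
  simp [nbrs]

def dfsDec : List Bool → List ℕ → List V → Finset V → Finset V
  | [], _, _, disc => disc
  | b :: bs, ranks, stack, disc =>
    match stack with
    | [] => disc
    | u :: rest =>
      if b then
        match ranks with
        | [] => disc
        | r :: rs =>
          match (nbrs G u disc)[r]? with
          | none => disc
          | some w => dfsDec bs rs (w :: u :: rest) (insert w disc)
      else dfsDec bs ranks rest disc

def dfsEnc (A : Finset V) : ℕ → List V → Finset V → List Bool × List ℕ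
  | 0, _, _ => ([], [])
  | n+1, stack, disc =>
    if disc = A then ([], [])
    else
      match stack with
      | [] => ([], [])
      | u :: rest =>
        if hl : (nbrs G u disc).filter (· ∈ A) = [] then
          match rest with
          | [] => ([], [])
          | _ :: _ =>
            let p := dfsEnc A n rest disc
            (false :: p.1, p.2)
        else
          let w := ((nbrs G u disc).filter (· ∈ A)).head hl
          let p := dfsEnc A n (w :: u :: rest) (insert w disc)
          (true :: p.1, (nbrs G u disc).idxOf w :: p.2)

lemma dfsDec_falses : ∀ (bits : List Bool) (ranks : List ℕ) (stack : List V) (disc : Finset V),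
    (∀ b ∈ bits, b = false) → dfsDec G bits ranks stack disc = disc := by
  intro bits
  induction bits with
  | nil => intro _ _ _ _; rfl
  | cons b bs ih =>
    intro ranks stack disc hb
    have hbf : b = false := hb b (by simp)
    subst hbf
    match stack with
    | [] => rfl
    | u :: rest =>
      simp only [dfsDec, if_neg (by simp : ¬ (false = true))]
      exact ih ranks rest disc (fun x hx => hb x (by simp [hx]))

lemma dfsEnc_self (A : Finset V) : ∀ n stack, dfsEnc G A n stack A = ([], []) := by
  intro n stack
  cases n with
  | zero => rfl
  | succ n => simp [dfsEnc]

lemma closed_eq (A D : Finset V) (hconn : (G.induce (A : Set V)).Connected)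
    (hDA : D ⊆ A) (x0 : V) (hx0 : x0 ∈ D)
    (hcl : ∀ x ∈ D, ∀ y ∈ A, G.Adj x y → y ∈ D) : D = A := by
  apply Finset.Subset.antisymm hDA
  intro y hy
  have key : ∀ (a b : (A : Set V)), (G.induce (A : Set V)).Walk a b → a.1 ∈ D → b.1 ∈ D := by
    intro a b p
    induction p with
    | nil => exact id
    | cons h p ih =>
      intro ha
      rename_i u w _
      exact ih (hcl u.1 ha w.1 (by exact_mod_cast w.2) h)
  have hr := hconn.preconnected ⟨x0, by exact_mod_cast hDA hx0⟩ ⟨y, by exact_mod_cast hy⟩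
  exact hr.elim fun p => key _ _ p hx0

lemma dfs_main (A : Finset V) (hconn : (G.induce (A : Set V)).Connected)
    (d : ℕ) (hreg : G.IsRegularOfDegree d) :
    ∀ (n : ℕ) (stack : List V) (disc : Finset V),
    stack ≠ [] →
    (∀ x ∈ stack, x ∈ disc) →
    disc ⊆ A →
    (∀ x ∈ disc, x ∉ stack → ∀ y ∈ A, G.Adj x y → y ∈ disc) →
    (∀ x ∈ stack, ∃ y ∈ disc, G.Adj x y) →
    2 * (A.card - disc.card) + stack.length ≤ n →
    (∀ pad : List Bool, (∀ b ∈ pad, b = false) → ∀ padr : List ℕ,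
        dfsDec G ((dfsEnc G A n stack disc).1 ++ pad)
          ((dfsEnc G A n stack disc).2 ++ padr) stack disc = A)
    ∧ (dfsEnc G A n stack disc).2.length = A.card - disc.card
    ∧ (disc ≠ A →
        (dfsEnc G A n stack disc).1.length + 2 ≤ 2 * (A.card - disc.card) + stack.length)
    ∧ (∀ r ∈ (dfsEnc G A n stack disc).2, r + 2 ≤ d) := by
  intro n
  induction n with
  | zero =>
    intro stack disc hne _ _ _ _ hfuel
    exfalso
    have : stack.length ≠ 0 := by simpa [List.length_eq_zero_iff] using hne
    omega
  | succ n ih =>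
    intro stack disc hne hsd hdA hcl hnb hfuel
    by_cases hdisc : disc = A
    · subst hdisc
      rw [dfsEnc_self]
      refine ⟨?_, by simp, fun h => absurd rfl h, by simp⟩
      intro pad hpad padr
      simpa using dfsDec_falses G pad padr stack disc hpad
    · obtain ⟨u, rest, rfl⟩ := List.exists_cons_of_ne_nil hne
      by_cases hl : (nbrs G u disc).filter (· ∈ A) = []
      · -- no available neighbor: u's neighbors in A are all discovered
        have hufin : ∀ y ∈ A, G.Adj u y → y ∈ disc := by
          intro y hy hadj
          by_contra hyd
          have : y ∈ (nbrs G u disc).filter (· ∈ A) := by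
            rw [List.mem_filter]
            exact ⟨(mem_nbrs G).2 ⟨hadj, hyd⟩, by simpa using hy⟩
          rw [hl] at this; simp at this
        match rest with
        | [] =>
          -- stuck at root: disc is closed, so disc = A, contradiction
          exfalso
          apply hdisc
          refine closed_eq G A disc hconn hdA u (hsd u (by simp)) ?_
          intro x hx y hy hadj
          by_cases hxu : x = u
          · exact hufin y hy (hxu ▸ hadj)
          · exact hcl x hx (by simp [hxu]) y hy hadj
        | u' :: rest' =>
          have hrec := ih (u' :: rest') disc (by simp) (fun x hx => hsd x (by simp [hx]))
            hdA
            (by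
              intro x hx hxs y hy hadj
              by_cases hxu : x = u
              · exact hufin y hy (hxu ▸ hadj)
              · exact hcl x hx (by simp at hxs ⊢; tauto) y hy hadj)
            (fun x hx => hnb x (by simp [hx]))
            (by simp at hfuel ⊢; omega)
          have henc : dfsEnc G A (n+1) (u :: u' :: rest') disc =
              (false :: (dfsEnc G A n (u' :: rest') disc).1,
               (dfsEnc G A n (u' :: rest') disc).2) := by
            simp only [dfsEnc]
            rw [if_neg hdisc]
            simp only [dif_pos hl]
          rw [henc]
          obtain ⟨h1, h2, h3, h4⟩ := hrec
          refine ⟨?_, h2, ?_, h4⟩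
          · intro pad hpad padr
            simp only [List.cons_append]
            simp only [dfsDec, if_neg (by simp : ¬ (false = true))]
            exact h1 pad hpad padr
          · intro _
            have := h3 hdisc
            simp at this ⊢
            omega
      · -- forward step
        set l := (nbrs G u disc).filter (· ∈ A) with hldef
        set w := l.head hl with hwdef
        have hwl : w ∈ l := List.head_mem hl
        have hwn : w ∈ nbrs G u disc := (List.mem_filter.1 hwl).1
        have hwA : w ∈ A := by have := (List.mem_filter.1 hwl).2; simpa using this
        have hadj : G.Adj u w ∧ w ∉ disc := (mem_nbrs G).1 hwn
        have hcard : disc.card < A.card := by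
          have := Finset.card_lt_card (Finset.ssubset_iff_of_subset hdA |>.2 ⟨w, hwA, hadj.2⟩)
          exact this
        have hcardins : (insert w disc).card = disc.card + 1 :=
          Finset.card_insert_of_notMem hadj.2
        have hrec := ih (w :: u :: rest) (insert w disc)
          (by simp)
          (by
            intro x hx
            rcases List.mem_cons.1 hx with h | h
            · simp [h]
            · exact Finset.mem_insert_of_mem (hsd x h))
          (Finset.insert_subset hwA hdA)
          (by
            intro x hx hxs y hy hadjxy
            rcases Finset.mem_insert.1 hx with h | h
            · exact absurd (by simp [h]) hxs
            · exact Finset.mem_insert_of_mem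
                (hcl x h (fun hc => hxs (by simp [List.mem_cons]; tauto)) y hy hadjxy))
          (by
            intro x hx
            rcases List.mem_cons.1 hx with h | h
            · exact ⟨u, Finset.mem_insert_of_mem (hsd u (by simp)), h ▸ hadj.1.symm⟩
            · obtain ⟨y, hy, hyadj⟩ := hnb x h
              exact ⟨y, Finset.mem_insert_of_mem hy, hyadj⟩)
          (by simp at hfuel ⊢; omega)
        have henc : dfsEnc G A (n+1) (u :: rest) disc =
            (true :: (dfsEnc G A n (w :: u :: rest) (insert w disc)).1,
             (nbrs G u disc).idxOf w ::
               (dfsEnc G A n (w :: u :: rest) (insert w disc)).2) := by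
          simp only [dfsEnc]
          rw [if_neg hdisc]
          exact dif_neg hl
        rw [henc]
        obtain ⟨h1, h2, h3, h4⟩ := hrec
        have hidx : (nbrs G u disc).idxOf w < (nbrs G u disc).length :=
          List.idxOf_lt_length_iff.2 hwn
        refine ⟨?_, ?_, ?_, ?_⟩
        · intro pad hpad padr
          simp only [List.cons_append]
          simp only [dfsDec, if_pos]
          have hget : (nbrs G u disc)[(nbrs G u disc).idxOf w]? = some w := by
            rw [List.getElem?_eq_getElem hidx, List.getElem_idxOf hidx]
          rw [hget]
          exact h1 pad hpad padr
        · simp only [List.length_cons, h2, hcardins]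
          omega
        · intro _
          simp only [List.length_cons]
          by_cases hdA2 : insert w disc = A
          · rw [hdA2, dfsEnc_self]
            simp only [List.length_nil]
            omega
          · have := h3 hdA2
            simp at this ⊢
            omega
        · intro r hr
          rcases List.mem_cons.1 hr with h | h
          · -- rank bound: u has a neighbor already in disc
            obtain ⟨y, hy, hyadj⟩ := hnb u (by simp)
            have hy2 : y ∈ G.neighborFinset u ∩ disc := by
              simp [Finset.mem_inter, SimpleGraph.mem_neighborFinset, hyadj, hy]
            have hlen : (nbrs G u disc).length + 1 ≤ d := by
              rw [length_nbrs]
              have h5 : (G.neighborFinset u \ disc).card + (G.neighborFinset u ∩ disc).card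
                  = (G.neighborFinset u).card := Finset.card_sdiff_add_card_inter _ _
              have h6 : 1 ≤ (G.neighborFinset u ∩ disc).card :=
                Finset.card_pos.2 ⟨y, hy2⟩
              have h7 : (G.neighborFinset u).card = d := hreg u
              omega
            have hrlt : r < (nbrs G u disc).length := by rw [h]; exact hidx
            omega
          · exact h4 r h

/-- total decoding function -/
def psi (d t : ℕ) (v : V)
    (c : Fin d × (Fin (2*(t-2)) → Bool) × (Fin (t-2) → Fin (d-1))) : Finset V :=
  dfsDec G (List.ofFn c.2.1) ((List.ofFn c.2.2).map Fin.val)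
    [(nbrs G v {v}).getD c.1 v, v] (insert ((nbrs G v {v}).getD c.1 v) {v})

lemma exists_code (d t : ℕ) (hreg : G.IsRegularOfDegree d) (v : V) (ht : 2 ≤ t)
    (A : Finset V) (hv : v ∈ A) (hcard : A.card = t)
    (hconn : (G.induce (A : Set V)).Connected) :
    ∃ c : Fin d × (Fin (2*(t-2)) → Bool) × (Fin (t-2) → Fin (d-1)), psi G d t v c = A := by
  classical
  -- v has a neighbor in A
  obtain ⟨w1, hw1A, hw1adj⟩ : ∃ w ∈ A, G.Adj v w := by
    obtain ⟨u, hu, hune⟩ := Finset.exists_mem_ne (by omega : 1 < A.card) v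
    have hr := hconn.preconnected ⟨v, by exact_mod_cast hv⟩ ⟨u, by exact_mod_cast hu⟩
    obtain ⟨p⟩ := hr
    cases p with
    | nil => exact absurd rfl hune
    | cons h q =>
      rename_i b
      exact ⟨b.1, by exact_mod_cast b.2, h⟩
  set L := nbrs G v ({v} : Finset V) with hLdef
  have hLlen : L.length = d := by
    rw [hLdef, length_nbrs]
    rw [Finset.sdiff_singleton_eq_erase, Finset.erase_eq_of_notMem (by simp)]
    exact hreg v
  have hl0 : L.filter (· ∈ A) ≠ [] := by
    intro hnil
    have : w1 ∈ L.filter (· ∈ A) := by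
      rw [List.mem_filter]
      exact ⟨(mem_nbrs G).2 ⟨hw1adj, by simpa using hw1adj.ne'⟩, by simpa using hw1A⟩
    rw [hnil] at this; simp at this
  set w0 := (L.filter (· ∈ A)).head hl0 with hw0def
  have hw0l : w0 ∈ L.filter (· ∈ A) := List.head_mem hl0
  have hw0L : w0 ∈ L := (List.mem_filter.1 hw0l).1
  have hw0A : w0 ∈ A := by have := (List.mem_filter.1 hw0l).2; simpa using this
  have hw0adj : G.Adj v w0 ∧ w0 ∉ ({v} : Finset V) := (mem_nbrs G).1 hw0L
  have hw0ne : w0 ≠ v := by simpa using hw0adj.2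
  set disc0 : Finset V := insert w0 {v} with hdisc0
  have hd0card : disc0.card = 2 := by
    rw [hdisc0, Finset.card_insert_of_notMem (by simpa using hw0ne)]
    simp
  have hmain := dfs_main G A hconn d hreg (2*t+2) [w0, v] disc0
    (by simp)
    (by intro x hx; simp at hx; rcases hx with h | h <;> simp [hdisc0, h])
    (by
      intro x hx
      simp [hdisc0] at hx
      rcases hx with h | h
      · exact h ▸ hw0A
      · exact h ▸ hv)
    (by
      intro x hx hxs
      exfalso; apply hxs
      simp [hdisc0] at hx ⊢
      tauto)
    (by
      intro x hx
      simp at hx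
      rcases hx with h | h
      · exact ⟨v, by simp [hdisc0], h ▸ hw0adj.1.symm⟩
      · exact ⟨w0, by simp [hdisc0], h ▸ hw0adj.1⟩)
    (by
      simp only [List.length_cons, List.length_nil, hd0card, hcard]
      omega)
  obtain ⟨h1, h2, h3, h4⟩ := hmain
  set bs := (dfsEnc G A (2*t+2) [w0, v] disc0).1 with hbsdef
  set rs := (dfsEnc G A (2*t+2) [w0, v] disc0).2 with hrsdef
  have hrslen : rs.length = t - 2 := by rw [hrsdef, h2, hd0card, hcard]
  have hbslen : bs.length ≤ 2 * (t - 2) := by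
    by_cases hdA : disc0 = A
    · rw [hbsdef, hdA, dfsEnc_self]; simp
    · have := h3 hdA
      simp only [List.length_cons, List.length_nil, hd0card, hcard] at this
      omega
  have hidx0 : L.idxOf w0 < L.length := List.idxOf_lt_length_iff.2 hw0L
  refine ⟨⟨⟨L.idxOf w0, hLlen ▸ hidx0⟩,
    fun i => bs.getD i false,
    fun i => ⟨rs.getD i 0, ?_⟩⟩, ?_⟩
  · have hilt : (i : ℕ) < rs.length := by rw [hrslen]; exact i.isLt
    rw [List.getD_eq_getElem rs 0 hilt]
    have := h4 _ (List.getElem_mem hilt)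
    omega
  · -- decoding gives back A
    have hw0' : L.getD (L.idxOf w0) v = w0 := by
      rw [List.getD_eq_getElem L v hidx0, List.getElem_idxOf hidx0]
    have hofn_bits : (List.ofFn fun i : Fin (2*(t-2)) => bs.getD i false)
        = bs ++ List.replicate (2*(t-2) - bs.length) false := by
      apply List.ext_getElem
      · simp; omega
      · intro i hi1 hi2
        simp only [List.getElem_ofFn]
        by_cases hib : i < bs.length
        · rw [List.getD_eq_getElem bs false hib, List.getElem_append_left hib]
        · rw [List.getD_eq_default bs false (by omega), List.getElem_append_right (by omega)]
          simp
    have hofn_ranks : ((List.ofFn fun i : Fin (t-2) =>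
        (⟨rs.getD i 0, by
          have hilt : (i : ℕ) < rs.length := by rw [hrslen]; exact i.isLt
          rw [List.getD_eq_getElem rs 0 hilt]
          have := h4 _ (List.getElem_mem hilt)
          omega⟩ : Fin (d-1))).map Fin.val) = rs := by
      apply List.ext_getElem
      · simp [hrslen]
      · intro i hi1 hi2
        simp only [List.getElem_map, List.getElem_ofFn]
        exact List.getD_eq_getElem rs 0 hi2
    show dfsDec G _ _ _ _ = A
    rw [hw0']
    rw [hofn_bits, hofn_ranks]
    have := h1 (List.replicate (2*(t-2) - bs.length) false) (by simp) []
    rw [List.append_nil] at this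
    exact this
end

set_option synthInstance.maxHeartbeats 1000000 in
/-- If `G` is a `d`-regular simple graph on a finite vertex set `V`, `d ≥ 1`,
`v ∈ V` is a fixed vertex and `t ≥ 2`, then the number of `t`-element subsets `A ⊆ V`
containing `v` and inducing a connected subgraph of `G` is at most
`4^(t-2) * d * (d-1)^(t-2)`. -/
theorem connected_induced_subgraph_count_rooted {V : Type*} [Fintype V] [DecidableEq V]
    (G : SimpleGraph V) [DecidableRel G.Adj] (d t : ℕ) (hd : 1 ≤ d)
    (hreg : G.IsRegularOfDegree d) (v : V) (ht : 2 ≤ t) :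
    {A : Finset V | v ∈ A ∧ A.card = t ∧ (G.induce (A : Set V)).Connected}.ncard ≤
      4 ^ (t - 2) * d * (d - 1) ^ (t - 2) := by
  classical
  letI : LinearOrder V := LinearOrder.lift' (Fintype.equivFin V) (Equiv.injective _)
  set S := {A : Finset V | v ∈ A ∧ A.card = t ∧ (G.induce (A : Set V)).Connected} with hSdef
  have hex : ∀ A ∈ S, ∃ c : Fin d × (Fin (2*(t-2)) → Bool) × (Fin (t-2) → Fin (d-1)),
      psi G d t v c = A := by
    intro A hA
    obtain ⟨hv, hcard, hconn⟩ := hA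
    exact exists_code G d t hreg v ht A hv hcard hconn
  choose f hf using hex
  have hinj : Function.Injective (fun x : S => f x.1 x.2) := by
    intro a b h
    apply Subtype.ext
    rw [← hf a.1 a.2, ← hf b.1 b.2]
    exact congrArg (psi G d t v) h
  calc S.ncard = Nat.card S := (Nat.card_coe_set_eq S).symm
    _ ≤ Nat.card (Fin d × (Fin (2*(t-2)) → Bool) × (Fin (t-2) → Fin (d-1))) :=
        Nat.card_le_card_of_injective _ hinj
    _ = d * (2 ^ (2*(t-2)) * (d-1) ^ (t-2)) := by
        simp [Nat.card_eq_fintype_card, Fintype.card_fun]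
    _ = 4 ^ (t-2) * d * (d-1) ^ (t-2) := by
        rw [pow_mul]
        ring
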